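/- Consider the asynchronous distributed logic-AND dynamics on a finite connected undirected graph G=(V,E) with diameter d_G (state matrices S_i in {0,1}^{d_G x d_i} initialized to zero, flags C_i(t), one node awakening per time step with the update rule: S_i[1,d_i] <- C_i(t); S_i[l,d_i] <- prod_{b=1}^{d_i} S_i[l-1,b] for l = 2,...,d_G; then each neighbor j copies S_i[:,d_i] into its column for i). If at some time t a node ell satisfies prod_{b=1}^{d_ell} S_ell[d_G, b](t) = 1, then every node j in V must have had C_j(t') = 1 at some time t' <= t. -/

import Mathlib

/-- The new self-column computed by an awakening node in the asynchronous logic-AND: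
row `0` (paper row 1) gets the flag `c`; row `l+1` (paper row `l+2`) is the logical
product of all entries of row `l`, i.e. the (old) neighbor entries `nbr l` of row `l`
together with the already-updated self entry `newCol c nbr l`. -/
def newCol (c : Prop) (nbr : ℕ → Prop) : ℕ → Prop
  | 0 => c
  | l + 1 => newCol c nbr l ∧ nbr l

lemma newCol_c {c : Prop} {nbr : ℕ → Prop} : ∀ l, newCol c nbr l → c
  | 0, h => h
  | l + 1, h => newCol_c l h.1

/-- In a connected graph, from a vertex at positive distance from `j` there is a
neighbor strictly closer to `j`. -/
lemma exists_adj_dist_lt {V : Type*} {G : SimpleGraph V} (hconn : G.Connected)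
    {b j : V} (h : G.dist b j ≠ 0) :
    ∃ m, G.Adj b m ∧ G.dist m j + 1 ≤ G.dist b j := by
  obtain ⟨p, hp⟩ := (hconn b j).exists_walk_length_eq_dist
  cases p with
  | nil => simp at hp; exact absurd (by simp) h
  | cons hadj q =>
    exact ⟨_, hadj, by
      have := SimpleGraph.dist_le q
      simp [SimpleGraph.Walk.length_cons] at hp
      omega⟩

/-- Asynchronous distributed logic-AND, necessity: if at time `t` some node `ℓ` has its
last row (row `d_G`, index `d_G - 1`) all equal to `1`, then every node `j` must have
had its flag `C j` equal to `1` at some previous time `t' ≤ t`. -/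
theorem logicAND_sound
    (N : ℕ) (G : SimpleGraph (Fin N)) [DecidableRel G.Adj]
    (hconn : G.Connected)
    (dG : ℕ) (hdG : dG = G.diam) (hdG1 : 1 ≤ dG)
    (S : ℕ → Fin N → ℕ → Fin N → Prop)
    (C : ℕ → Fin N → Prop)
    (awake : ℕ → Fin N)
    (hinit : ∀ i l j, ¬ S 0 i l j)
    (hupd : ∀ t (a : Fin N) (l : ℕ) (b : Fin N),
      ((b = awake t ∧ (a = awake t ∨ G.Adj (awake t) a)) →
        (S (t + 1) a l b ↔ newCol (C t (awake t))
          (fun m => ∀ j, G.Adj (awake t) j → S t (awake t) m j) l)) ∧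
      (¬ (b = awake t ∧ (a = awake t ∨ G.Adj (awake t) a)) →
        (S (t + 1) a l b ↔ S t a l b)))
    (t : ℕ) (ℓ : Fin N)
    (hrow : ∀ b : Fin N, (b = ℓ ∨ G.Adj ℓ b) → S t ℓ (dG - 1) b) :
    ∀ j : Fin N, ∃ t' : ℕ, t' ≤ t ∧ C t' j := by
  -- Key invariant: if `S t a l b`, then every node within distance `l` of `b`
  -- has raised its flag at some time `t' ≤ t`.
  have key : ∀ t (a : Fin N) (l : ℕ) (b : Fin N), S t a l b →
      ∀ j : Fin N, G.dist b j ≤ l → ∃ t', t' ≤ t ∧ C t' j := by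
    intro t
    induction t with
    | zero => intro a l b h; exact absurd h (hinit a l b)
    | succ t ih =>
      intro a l b h j hdist
      by_cases hc : b = awake t ∧ (a = awake t ∨ G.Adj (awake t) a)
      · have hnew := ((hupd t a l b).1 hc).mp h
        obtain ⟨rfl, -⟩ := hc
        have main : ∀ l', newCol (C t (awake t)) (fun m => ∀ j, G.Adj (awake t) j → S t (awake t) m j) l' →
            ∀ j : Fin N, G.dist (awake t) j ≤ l' → ∃ t', t' ≤ t + 1 ∧ C t' j := by
          intro l'
          induction l' with
          | zero =>
            intro hnew j hdist
            have : (awake t) = j := hconn.dist_eq_zero_iff.mp (Nat.le_zero.mp hdist)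
            exact ⟨t, Nat.le_succ t, this ▸ newCol_c 0 hnew⟩
          | succ l ihl =>
            intro hnew j hdist
            rcases Nat.lt_or_ge (G.dist (awake t) j) (l + 1) with hlt | hge
            · exact ihl hnew.1 j (Nat.lt_succ_iff.mp hlt)
            · have hne : G.dist (awake t) j ≠ 0 := by omega
              obtain ⟨m, hadj, hm⟩ := exists_adj_dist_lt hconn hne
              have hS : S t (awake t) l m := hnew.2 m hadj
              obtain ⟨t', ht', hC⟩ := ih (awake t) l m hS j (by omega)
              exact ⟨t', ht'.trans (Nat.le_succ t), hC⟩
        exact main l hnew j hdist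
      · have := ((hupd t a l b).2 hc).mp h
        obtain ⟨t', ht', hC⟩ := ih a l b this j hdist
        exact ⟨t', ht'.trans (Nat.le_succ t), hC⟩
  intro j
  have hediam : G.ediam ≠ ⊤ := G.ediam_ne_top_of_diam_ne_zero (by omega)
  rcases Nat.lt_or_ge (G.dist ℓ j) dG with hlt | hge
  · exact key t ℓ (dG - 1) ℓ (hrow ℓ (Or.inl rfl)) j (by omega)
  · have hne : G.dist ℓ j ≠ 0 := by omega
    obtain ⟨m, hadj, hm⟩ := exists_adj_dist_lt hconn hne
    have hle : G.dist ℓ j ≤ dG := hdG ▸ G.dist_le_diam hediam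
    exact key t ℓ (dG - 1) m (hrow m (Or.inr hadj)) j (by omega)
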